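/- (Amalgamation preserves unique factorization.) Let G be a finite abelian group, let S be a UFIS over G, and let T be a subset of S with σ(T) ≠ 0. Then for any m ∈ ℕ such that (σ(T), m) ∉ S∖T, the indexed sequence (S∖T) ∪ {(σ(T), m)} is a UFIS over G. -/
import Mathlib


open Finset

def IsIndexedSeq {G : Type*} [AddCommGroup G] (S : Finset (G × ℕ)) : Prop :=
  ∀ x ∈ S, x.1 ≠ 0

def seqSum {G : Type*} [AddCommGroup G] (S : Finset (G × ℕ)) : G :=
  ∑ x ∈ S, x.1

noncomputable def crossNum {G : Type*} [AddCommGroup G] (S : Finset (G × ℕ)) : ℝ :=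
  ∑ x ∈ S, (1 : ℝ) / (addOrderOf x.1 : ℝ)

def ZeroSumFree {G : Type*} [AddCommGroup G] (S : Finset (G × ℕ)) : Prop :=
  ∀ T ⊆ S, T.Nonempty → seqSum T ≠ 0

def IsIrreducibleSeq {G : Type*} [AddCommGroup G] (S : Finset (G × ℕ)) : Prop :=
  S.Nonempty ∧ seqSum S = 0 ∧ ∀ T ⊆ S, T.Nonempty → T ≠ S → seqSum T ≠ 0

def IsFactorization {G : Type*} [AddCommGroup G] (S : Finset (G × ℕ))
    (F : Finset (Finset (G × ℕ))) : Prop :=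
  (∀ A ∈ F, IsIrreducibleSeq A) ∧
    (∀ A ∈ F, ∀ B ∈ F, A ≠ B → Disjoint A B) ∧
    (∀ x, x ∈ S ↔ ∃ A ∈ F, x ∈ A)

def IsUFIS {G : Type*} [AddCommGroup G] (S : Finset (G × ℕ)) : Prop :=
  IsIndexedSeq S ∧ seqSum S = 0 ∧ ∃! F, IsFactorization S F

noncomputable def littleK (G : Type*) [AddCommGroup G] : ℝ :=
  sSup {x : ℝ | ∃ S : Finset (G × ℕ), IsIndexedSeq S ∧ ZeroSumFree S ∧ crossNum S = x}

noncomputable def bigK (G : Type*) [AddCommGroup G] : ℝ :=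
  sSup {x : ℝ | ∃ S : Finset (G × ℕ), IsIndexedSeq S ∧ IsIrreducibleSeq S ∧ crossNum S = x}

noncomputable def K1 (G : Type*) [AddCommGroup G] : ℝ :=
  sSup {x : ℝ | ∃ S : Finset (G × ℕ), IsUFIS S ∧ crossNum S = x}

def DenseZSF {G : Type*} [AddCommGroup G] (S : Finset (G × ℕ)) : Prop :=
  IsIndexedSeq S ∧ ZeroSumFree S ∧ crossNum S = littleK G ∧
    ∀ T : Finset (G × ℕ), IsIndexedSeq T → ZeroSumFree T → crossNum T = littleK G →
      S.card ≤ T.card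

def DenseUFIS {G : Type*} [AddCommGroup G] (S : Finset (G × ℕ)) : Prop :=
  IsUFIS S ∧ crossNum S = K1 G ∧
    ∀ T : Finset (G × ℕ), IsUFIS T → crossNum T = K1 G → S.card ≤ T.card

def WidePrime (p n : ℕ) : Prop :=
  ¬ p ∣ n ∧
    (p : ℝ) / ((p : ℝ) - 1) ≥
      ∏ q ∈ n.primeFactors,
        ((q : ℝ) ^ (n.factorization q + 1) - 1) /
          ((q : ℝ) ^ (n.factorization q + 1) - (q : ℝ) ^ (n.factorization q))

def Wide2Prime (p n : ℕ) : Prop :=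
  ¬ p ∣ n ∧
    ((p : ℝ) ^ 2 + 2 * (p : ℝ) - 2) / (p : ℝ) ^ 2 ≥
      ∏ q ∈ n.primeFactors,
        ((q : ℝ) ^ (n.factorization q + 1) - 1) /
          ((q : ℝ) ^ (n.factorization q + 1) - (q : ℝ) ^ (n.factorization q))

def IsWideNat (n : ℕ) : Prop :=
  0 < n ∧ ∀ q ∈ n.primeFactors,
    WidePrime q (∏ q' ∈ n.primeFactors.filter (fun q' => q < q'), q' ^ n.factorization q')

def Is2WideNat (n : ℕ) : Prop :=
  0 < n ∧ ∀ q ∈ n.primeFactors,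
    Wide2Prime q (∏ q' ∈ n.primeFactors.filter (fun q' => q < q'), q' ^ n.factorization q')


section AuxLemmas

variable {G : Type*} [AddCommGroup G] [DecidableEq G]

lemma seqSum_sdiff' {S T : Finset (G × ℕ)} (h : T ⊆ S) :
    seqSum (S \ T) = seqSum S - seqSum T := by
  unfold seqSum
  rw [eq_sub_iff_add_eq, Finset.sum_sdiff h]

lemma block_subset {S : Finset (G × ℕ)} {F : Finset (Finset (G × ℕ))}
    (hF : IsFactorization S F) {A : Finset (G × ℕ)} (hA : A ∈ F) : A ⊆ S :=
  fun x hx => (hF.2.2 x).2 ⟨A, hA, hx⟩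

lemma block_eq_of_mem {S : Finset (G × ℕ)} {F : Finset (Finset (G × ℕ))}
    (hF : IsFactorization S F) {A B : Finset (G × ℕ)} (hA : A ∈ F) (hB : B ∈ F)
    {x : G × ℕ} (hxA : x ∈ A) (hxB : x ∈ B) : A = B := by
  by_contra h
  exact Finset.disjoint_left.mp (hF.2.1 A hA B hB h) hxA hxB

lemma exists_fact : ∀ S : Finset (G × ℕ), seqSum S = 0 → ∃ F, IsFactorization S F := by
  intro S
  induction S using Finset.strongInduction with
  | _ S ih =>
    intro h0
    rcases S.eq_empty_or_nonempty with rfl | hne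
    · exact ⟨∅, fun A hA => absurd hA (notMem_empty _),
        fun A hA => absurd hA (notMem_empty _), by simp⟩
    · have hmem : S ∈ S.powerset.filter (fun A => A.Nonempty ∧ seqSum A = 0) := by
        simp [hne, h0]
      obtain ⟨A, hA, hmin⟩ := Finset.exists_min_image _ Finset.card ⟨S, hmem⟩
      simp only [mem_filter, mem_powerset] at hA
      obtain ⟨hAS, hAne, hA0⟩ := hA
      have hirr : IsIrreducibleSeq A := by
        refine ⟨hAne, hA0, fun U hUA hUne hUA' hU0 => ?_⟩
        have h1 : A.card ≤ U.card :=
          hmin U (by simp [mem_filter, mem_powerset, hUA.trans hAS, hUne, hU0])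
        have h2 : U.card < A.card := card_lt_card (ssubset_of_subset_of_ne hUA hUA')
        omega
      have hsub : S \ A ⊂ S := by
        refine Finset.ssubset_iff_of_subset (sdiff_subset) |>.2 ?_
        obtain ⟨a, ha⟩ := hAne
        exact ⟨a, hAS ha, by simp [ha]⟩
      have hs0 : seqSum (S \ A) = 0 := by rw [seqSum_sdiff' hAS, h0, hA0, sub_zero]
      obtain ⟨F, hF⟩ := ih _ hsub hs0
      refine ⟨insert A F, ?_, ?_, ?_⟩
      · intro B hB
        rcases mem_insert.mp hB with rfl | hB
        · exact hirr
        · exact hF.1 B hB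
      · have key : ∀ B ∈ F, Disjoint A B := by
          intro B hB
          have hsub' := block_subset hF hB
          exact disjoint_left.mpr fun x hxA hxB => (mem_sdiff.mp (hsub' hxB)).2 hxA
        intro B hB C hC hne'
        rcases mem_insert.mp hB with rfl | hB' <;> rcases mem_insert.mp hC with rfl | hC'
        · exact absurd rfl hne'
        · exact key C hC'
        · exact (key B hB').symm
        · exact hF.2.1 B hB' C hC' hne'
      · intro x
        constructor
        · intro hx
          by_cases hxA : x ∈ A
          · exact ⟨A, mem_insert_self _ _, hxA⟩
          · obtain ⟨B, hB, hxB⟩ := (hF.2.2 x).1 (mem_sdiff.mpr ⟨hx, hxA⟩)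
            exact ⟨B, mem_insert_of_mem hB, hxB⟩
        · rintro ⟨B, hB, hxB⟩
          rcases mem_insert.mp hB with rfl | hB'
          · exact hAS hxB
          · exact (mem_sdiff.mp (block_subset hF hB' hxB)).1

lemma expand_fact {S T : Finset (G × ℕ)} (hTS : T ⊆ S) (hS0 : seqSum S = 0)
    {m : ℕ} (hgm : (seqSum T, m) ∉ S \ T)
    {F' : Finset (Finset (G × ℕ))}
    (hF' : IsFactorization (insert (seqSum T, m) (S \ T)) F')
    {A : Finset (G × ℕ)} (hA : A ∈ F') (hgA : (seqSum T, m) ∈ A) :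
    ∃ F, IsFactorization S F ∧ F'.erase A ⊆ F ∧
      ∀ B ∈ F, B ∉ F'.erase A → B ⊆ (A.erase (seqSum T, m)) ∪ T := by
  set g := seqSum T with hg
  have hAS' : A ⊆ insert (g, m) (S \ T) := block_subset hF' hA
  have heraseSub : A.erase (g, m) ⊆ S \ T := by
    intro x hx
    rcases mem_insert.mp (hAS' (mem_of_mem_erase hx)) with rfl | h
    · exact absurd rfl (ne_of_mem_erase hx)
    · exact h
  have hdisj : Disjoint (A.erase (g, m)) T :=
    disjoint_left.mpr fun x hx hxT => (mem_sdiff.mp (heraseSub hx)).2 hxT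
  have hA0 : seqSum A = 0 := (hF'.1 A hA).2.1
  have htilde0 : seqSum (A.erase (g, m) ∪ T) = 0 := by
    unfold seqSum at *
    rw [Finset.sum_union hdisj]
    have h := Finset.sum_erase_add A (fun x => x.1) hgA
    rw [hA0] at h
    have hval : (∑ x ∈ A.erase (g, m), x.1) = -g := eq_neg_of_add_eq_zero_left h
    rw [hval, hg]
    abel
  obtain ⟨GA, hGA⟩ := exists_fact _ htilde0
  have hGAsub : ∀ C ∈ GA, C ⊆ A.erase (g, m) ∪ T := fun C hC => block_subset hGA hC
  have hFblockSub : ∀ B ∈ F'.erase A, B ⊆ S \ T := by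
    intro B hB x hx
    have hBA : B ≠ A := ne_of_mem_erase hB
    have hBF : B ∈ F' := mem_of_mem_erase hB
    have hxS' := block_subset hF' hBF hx
    rcases mem_insert.mp hxS' with rfl | h
    · exact absurd (block_eq_of_mem hF' hBF hA hx hgA) hBA
    · exact h
  refine ⟨F'.erase A ∪ GA, ⟨?_, ?_, ?_⟩, subset_union_left, ?_⟩
  · intro B hB
    rcases mem_union.mp hB with hB | hB
    · exact hF'.1 B (mem_of_mem_erase hB)
    · exact hGA.1 B hB
  · have cross : ∀ B ∈ F'.erase A, ∀ C ∈ GA, Disjoint B C := by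
      intro B hB C hC
      have hBsub := hFblockSub B hB
      have hBdisjA : Disjoint B A :=
        hF'.2.1 B (mem_of_mem_erase hB) A hA (ne_of_mem_erase hB)
      refine disjoint_left.mpr fun x hxB hxC => ?_
      rcases mem_union.mp (hGAsub C hC hxC) with h | h
      · exact disjoint_left.mp hBdisjA hxB (mem_of_mem_erase h)
      · exact (mem_sdiff.mp (hBsub hxB)).2 h
    intro B hB C hC hne'
    rcases mem_union.mp hB with hB' | hB' <;> rcases mem_union.mp hC with hC' | hC'
    · exact hF'.2.1 B (mem_of_mem_erase hB') C (mem_of_mem_erase hC') hne'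
    · exact cross B hB' C hC'
    · exact (cross C hC' B hB').symm
    · exact hGA.2.1 B hB' C hC' hne'
  · intro x
    constructor
    · intro hx
      by_cases hxT : x ∈ T
      · obtain ⟨C, hC, hxC⟩ := (hGA.2.2 x).1 (mem_union_right _ hxT)
        exact ⟨C, mem_union_right _ hC, hxC⟩
      · have hxS' : x ∈ insert (g, m) (S \ T) :=
          mem_insert_of_mem (mem_sdiff.mpr ⟨hx, hxT⟩)
        obtain ⟨B, hB, hxB⟩ := (hF'.2.2 x).1 hxS'
        by_cases hBA : B = A
        · subst hBA
          have hxne : x ≠ (g, m) := by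
            rintro rfl
            exact hgm (mem_sdiff.mpr ⟨hx, hxT⟩)
          have : x ∈ B.erase (g, m) ∪ T := mem_union_left _ (mem_erase.mpr ⟨hxne, hxB⟩)
          obtain ⟨C, hC, hxC⟩ := (hGA.2.2 x).1 this
          exact ⟨C, mem_union_right _ hC, hxC⟩
        · exact ⟨B, mem_union_left _ (mem_erase.mpr ⟨hBA, hB⟩), hxB⟩
    · rintro ⟨B, hB, hxB⟩
      rcases mem_union.mp hB with hB' | hB'
      · exact (mem_sdiff.mp (hFblockSub B hB' hxB)).1
      · rcases mem_union.mp (hGAsub B hB' hxB) with h | h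
        · exact (mem_sdiff.mp (heraseSub h)).1
        · exact hTS h
  · intro B hB hB'
    rcases mem_union.mp hB with h | h
    · exact absurd h hB'
    · exact hGAsub B h

end AuxLemmas

theorem stmt18 (G : Type*) [AddCommGroup G] [Fintype G] [DecidableEq G]
    (S : Finset (G × ℕ)) (hS : IsUFIS S)
    (T : Finset (G × ℕ)) (hTS : T ⊆ S) (hT : seqSum T ≠ 0) :
    ∀ m : ℕ, (seqSum T, m) ∉ S \ T →
      IsUFIS (insert (seqSum T, m) (S \ T)) := by
  intro m hgm
  obtain ⟨hInd, hS0, F0, hF0, huniq⟩ := hS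
  set g := seqSum T with hg
  have hS'0 : seqSum (insert (g, m) (S \ T)) = 0 := by
    have h1 := seqSum_sdiff' hTS
    simp only [seqSum] at h1 hS0 ⊢
    rw [Finset.sum_insert hgm, h1, hS0]
    have h2 : g = ∑ x ∈ T, x.1 := rfl
    rw [show ((g, m).1 : G) = g from rfl, h2]
    abel
  refine ⟨?_, hS'0, ?_⟩
  · intro x hx
    rcases mem_insert.mp hx with rfl | hx
    · exact hT
    · exact hInd x (mem_sdiff.mp hx).1
  · obtain ⟨F1, hF1⟩ := exists_fact _ hS'0
    -- key: blocks not containing (g,m) transfer between factorizations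
    have key : ∀ Fa Fb : Finset (Finset (G × ℕ)),
        IsFactorization (insert (g, m) (S \ T)) Fa →
        IsFactorization (insert (g, m) (S \ T)) Fb →
        ∀ B ∈ Fa, (g, m) ∉ B → B ∈ Fb := by
      intro Fa Fb ha hb B hB hgB
      obtain ⟨A1, hA1, hgA1⟩ := (ha.2.2 (g, m)).1 (mem_insert_self _ _)
      obtain ⟨A2, hA2, hgA2⟩ := (hb.2.2 (g, m)).1 (mem_insert_self _ _)
      obtain ⟨P1, hP1, hP1sub, _⟩ := expand_fact hTS hS0 hgm ha hA1 hgA1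
      obtain ⟨P2, hP2, hP2sub, hP2tilde⟩ := expand_fact hTS hS0 hgm hb hA2 hgA2
      have hPeq : P1 = P2 := by rw [huniq P1 hP1, huniq P2 hP2]
      have hBne : B ≠ A1 := fun h => hgB (h ▸ hgA1)
      have hBP2 : B ∈ P2 := hPeq ▸ hP1sub (mem_erase.mpr ⟨hBne, hB⟩)
      by_cases hBF2 : B ∈ Fb.erase A2
      · exact mem_of_mem_erase hBF2
      · exfalso
        have hBsub : B ⊆ A2.erase (g, m) ∪ T := hP2tilde B hBP2 hBF2
        have hBST : B ⊆ S \ T := by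
          intro x hx
          rcases mem_insert.mp (block_subset ha hB hx) with rfl | h
          · exact absurd hx hgB
          · exact h
        have hBA2 : B ⊆ A2 := by
          intro x hx
          rcases mem_union.mp (hBsub hx) with h | h
          · exact mem_of_mem_erase h
          · exact absurd h (mem_sdiff.mp (hBST hx)).2
        have hirrB := ha.1 B hB
        exact (hb.1 A2 hA2).2.2 B hBA2 hirrB.1
          (fun h => hgB (h ▸ hgA2)) hirrB.2.1
    -- blocks containing (g,m) also transfer
    have key2 : ∀ Fa Fb : Finset (Finset (G × ℕ)),
        IsFactorization (insert (g, m) (S \ T)) Fa →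
        IsFactorization (insert (g, m) (S \ T)) Fb →
        ∀ B1 ∈ Fa, ∀ B2 ∈ Fb, (g, m) ∈ B1 → (g, m) ∈ B2 → B1 ⊆ B2 := by
      intro Fa Fb ha hb B1 hB1 B2 hB2 hg1 hg2 x hx
      by_cases hxg : x = (g, m)
      · exact hxg ▸ hg2
      · obtain ⟨C, hC, hxC⟩ := (hb.2.2 x).1 (block_subset ha hB1 hx)
        by_cases hgC : (g, m) ∈ C
        · rwa [block_eq_of_mem hb hC hB2 hgC hg2] at hxC
        · have hCFa : C ∈ Fa := key Fb Fa hb ha C hC hgC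
          have : C = B1 := block_eq_of_mem ha hCFa hB1 hxC hx
          exact absurd (this ▸ hg1) hgC
    have trans : ∀ Fa Fb : Finset (Finset (G × ℕ)),
        IsFactorization (insert (g, m) (S \ T)) Fa →
        IsFactorization (insert (g, m) (S \ T)) Fb →
        ∀ B ∈ Fa, B ∈ Fb := by
      intro Fa Fb ha hb B hB
      by_cases hgB : (g, m) ∈ B
      · obtain ⟨A', hA', hgA'⟩ := (hb.2.2 (g, m)).1 (mem_insert_self _ _)
        have : B = A' := Subset.antisymm
          (key2 Fa Fb ha hb B hB A' hA' hgB hgA')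
          (key2 Fb Fa hb ha A' hA' B hB hgA' hgB)
        exact this ▸ hA'
      · exact key Fa Fb ha hb B hB hgB
    refine ⟨F1, hF1, fun F2 h2 => ?_⟩
    ext B
    exact ⟨fun h => trans F2 F1 h2 hF1 B h, fun h => trans F1 F2 hF1 h2 B h⟩
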